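/- arXiv:2412.15766 — 2 statements merged into one kernel-verified Lean document; each statement's English description precedes it below -/
import Mathlib

section
/- Let c ∈ (1,2) and ε ∈ (0, min{1/4, 2−c}). There exists C > 0 such that for all integers t ≥ 1 and all (ξ₁,ξ₂) in the box M̃_t = {|ξ₁| ≤ t^{2ε−1}, |ξ₂| ≤ t^{ε−c}}, we have |(1/t)∑_{n=1}^{t} e^{-2πi(ξ₂⌊n^c⌋ + ξ₁n)} − (1/t)∫_0^t e^{-2πi(ξ₂s^c + ξ₁s)} ds| ≤ C·t^{2ε−1}. -/
open MeasureTheory intervalIntegral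

noncomputable def e (x : ℝ) : ℂ := Complex.exp (2 * Real.pi * Complex.I * x)

lemma e_lip (x y : ℝ) : ‖e x - e y‖ ≤ 2 * Real.pi * |x - y| := by
  have hd : ∀ θ : ℝ, HasDerivWithinAt (fun θ : ℝ => e θ)
      (Complex.exp (2 * Real.pi * Complex.I * θ) * (2 * Real.pi * Complex.I)) Set.univ θ := by
    intro θ
    have h1 : HasDerivAt (fun θ : ℝ => (θ : ℂ)) 1 θ := (hasDerivAt_id θ).ofReal_comp
    have h2 := ((h1.const_mul (2 * Real.pi * Complex.I)).cexp)
    have h3 : HasDerivAt (fun θ : ℝ => e θ)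
        (Complex.exp (2 * Real.pi * Complex.I * θ) * (2 * Real.pi * Complex.I)) θ := by
      simpa [e] using h2
    exact h3.hasDerivWithinAt
  have hb : ∀ θ : ℝ, θ ∈ Set.univ →
      ‖Complex.exp (2 * Real.pi * Complex.I * θ) * (2 * Real.pi * Complex.I)‖ ≤ 2 * Real.pi := by
    intro θ _
    rw [norm_mul]
    have h1 : ‖Complex.exp (2 * Real.pi * Complex.I * (θ:ℂ))‖ = 1 := by
      have he : (2 * Real.pi * Complex.I * (θ:ℂ)) = ((2 * Real.pi * θ : ℝ):ℂ) * Complex.I := by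
        push_cast; ring
      rw [he, Complex.norm_exp_ofReal_mul_I]
    rw [h1, one_mul]
    have : ‖(2 * Real.pi * Complex.I : ℂ)‖ = 2 * Real.pi := by
      simp [norm_mul, abs_of_nonneg Real.pi_pos.le]
    rw [this]
  have := convex_univ.norm_image_sub_le_of_norm_hasDerivWithin_le
    (fun θ _ => hd θ) hb (Set.mem_univ y) (Set.mem_univ x)
  simpa [Real.norm_eq_abs] using this

lemma rpow_diff_le {c : ℝ} (hc : 1 ≤ c) {a b : ℝ} (ha : 0 ≤ a) (hab : a ≤ b) :
    |b ^ c - a ^ c| ≤ c * b ^ (c - 1) * (b - a) := by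
  have hb : 0 ≤ b := ha.trans hab
  have hd : ∀ x ∈ Set.Icc (0:ℝ) b, HasDerivWithinAt (fun x : ℝ => x ^ c)
      (c * x ^ (c - 1)) (Set.Icc 0 b) x := fun x _ =>
    (Real.hasDerivAt_rpow_const (Or.inr hc)).hasDerivWithinAt
  have hbd : ∀ x ∈ Set.Icc (0:ℝ) b, ‖c * x ^ (c - 1)‖ ≤ c * b ^ (c - 1) := by
    intro x hx
    rw [Real.norm_eq_abs, abs_of_nonneg (mul_nonneg (by linarith) (Real.rpow_nonneg hx.1 _))]
    exact mul_le_mul_of_nonneg_left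
      (Real.rpow_le_rpow hx.1 hx.2 (by linarith)) (by linarith)
  have := (convex_Icc 0 b).norm_image_sub_le_of_norm_hasDerivWithin_le hd hbd
    ⟨ha, hab⟩ ⟨hb, le_refl b⟩
  simpa [Real.norm_eq_abs, abs_of_nonneg (sub_nonneg.mpr hab)] using this

theorem stmt7 (c ε : ℝ) (hc1 : 1 < c) (hc2 : c < 2)
    (hε1 : 0 < ε) (hε2 : ε < min (1/4) (2 - c)) :
    ∃ C > (0 : ℝ), ∀ (t : ℕ), 1 ≤ t → ∀ (ξ₁ ξ₂ : ℝ),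
      |ξ₁| ≤ (t : ℝ) ^ (2 * ε - 1) → |ξ₂| ≤ (t : ℝ) ^ (ε - c) →
      ‖((t : ℂ))⁻¹ * ∑ n ∈ Finset.Icc 1 t,
            e (-(ξ₂ * (⌊(n : ℝ) ^ c⌋ : ℝ) + ξ₁ * n)) -
          ((t : ℂ))⁻¹ * ∫ s in (0 : ℝ)..(t : ℝ), e (-(ξ₂ * s ^ c + ξ₁ * s))‖ ≤
        C * (t : ℝ) ^ (2 * ε - 1) := by
  have hπ : (0:ℝ) < Real.pi := Real.pi_pos
  refine ⟨2 * Real.pi * (2 + c) + 1, by positivity, ?_⟩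
  intro t ht ξ₁ ξ₂ hξ₁ hξ₂
  have ht0 : (0:ℝ) < t := by exact_mod_cast ht
  have ht1 : (1:ℝ) ≤ t := by exact_mod_cast ht
  set f : ℝ → ℂ := fun s => e (-(ξ₂ * s ^ c + ξ₁ * s)) with hfdef
  have hfc : Continuous f := by
    apply Complex.continuous_exp.comp
    apply Continuous.mul continuous_const
    apply Complex.continuous_ofReal.comp
    exact (Continuous.add (continuous_const.mul
      (Real.continuous_rpow_const (by linarith))) (continuous_const.mul continuous_id)).neg
  -- split the integral
  have hsplit : (∫ s in (0:ℝ)..(t:ℝ), f s)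
      = ∑ i ∈ Finset.range t, ∫ s in (i:ℝ)..((i:ℝ)+1), f s := by
    have h := intervalIntegral.sum_integral_adjacent_intervals
      (a := fun k : ℕ => (k:ℝ)) (n := t) (f := f) (μ := volume)
      (fun k _ => hfc.intervalIntegrable _ _)
    push_cast at h
    rw [← h]
  -- rewrite the sum
  have hsum : ∑ n ∈ Finset.Icc 1 t, e (-(ξ₂ * (⌊(n : ℝ) ^ c⌋ : ℝ) + ξ₁ * n))
      = ∑ i ∈ Finset.range t, e (-(ξ₂ * (⌊((i:ℝ)+1) ^ c⌋ : ℝ) + ξ₁ * ((i:ℝ)+1))) := by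
    rw [← Finset.Ico_add_one_right_eq_Icc, Finset.sum_Ico_eq_sum_range]
    simp only [Nat.add_sub_cancel]
    refine Finset.sum_congr rfl fun i _ => ?_
    push_cast
    ring_nf
  set B : ℝ := 2 * Real.pi * (|ξ₁| + |ξ₂| * (1 + c * (t:ℝ) ^ (c-1))) with hBdef
  have key : ∀ i ∈ Finset.range t,
      ‖e (-(ξ₂ * (⌊((i:ℝ)+1) ^ c⌋ : ℝ) + ξ₁ * ((i:ℝ)+1))) - ∫ s in (i:ℝ)..((i:ℝ)+1), f s‖
        ≤ B := by
    intro i hi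
    have hit : (i:ℝ) + 1 ≤ t := by
      have := Finset.mem_range.mp hi
      exact_mod_cast Nat.succ_le_of_lt this
    set n : ℝ := (i:ℝ) + 1 with hn
    set A : ℝ := -(ξ₂ * (⌊n ^ c⌋ : ℝ) + ξ₁ * n) with hA
    have hconst : e A = ∫ _ in (i:ℝ)..((i:ℝ)+1), e A := by
      rw [intervalIntegral.integral_const]
      simp
    rw [hconst, ← intervalIntegral.integral_sub
      (intervalIntegrable_const) (hfc.intervalIntegrable _ _)]
    have hbound : ∀ s ∈ Set.uIoc (i:ℝ) ((i:ℝ)+1), ‖e A - f s‖ ≤ B := by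
      intro s hs
      rw [Set.uIoc_of_le (by linarith)] at hs
      have hs0 : (0:ℝ) ≤ s := le_trans (by positivity) hs.1.le
      have hsn : s ≤ n := hs.2
      have h1 : ‖e A - f s‖ ≤ 2 * Real.pi * |A - (-(ξ₂ * s ^ c + ξ₁ * s))| := e_lip _ _
      refine h1.trans ?_
      have h2 : |A - (-(ξ₂ * s ^ c + ξ₁ * s))|
          ≤ |ξ₂| * |s ^ c - (⌊n ^ c⌋ : ℝ)| + |ξ₁| * |s - n| := by
        have : A - (-(ξ₂ * s ^ c + ξ₁ * s))
            = ξ₂ * (s ^ c - (⌊n ^ c⌋ : ℝ)) + ξ₁ * (s - n) := by rw [hA]; ring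
        rw [this]
        calc _ ≤ |ξ₂ * (s ^ c - (⌊n ^ c⌋ : ℝ))| + |ξ₁ * (s - n)| := abs_add_le _ _
          _ = _ := by rw [abs_mul, abs_mul]
      have h3 : |s - n| ≤ 1 := by
        rw [abs_of_nonpos (by linarith)]
        have : (i:ℝ) ≤ s := hs.1.le
        simp only [hn]; linarith
      have h4 : |s ^ c - (⌊n ^ c⌋ : ℝ)| ≤ 1 + c * (t:ℝ) ^ (c-1) := by
        have hfl1 : (⌊n ^ c⌋ : ℝ) ≤ n ^ c := Int.floor_le _
        have hfl2 : n ^ c - 1 < (⌊n ^ c⌋ : ℝ) := by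
          have := Int.lt_floor_add_one (n ^ c); linarith
        have hmvt : |n ^ c - s ^ c| ≤ c * n ^ (c-1) * (n - s) :=
          rpow_diff_le hc1.le hs0 hsn
        have hns1 : n - s ≤ 1 := by
          have : (i:ℝ) ≤ s := hs.1.le
          simp only [hn]; linarith
        have hnt : n ^ (c-1) ≤ (t:ℝ) ^ (c-1) :=
          Real.rpow_le_rpow (by positivity) hit (by linarith)
        have h5 : c * n ^ (c-1) * (n - s) ≤ c * (t:ℝ) ^ (c-1) := by
          calc c * n ^ (c-1) * (n - s) ≤ c * n ^ (c-1) * 1 :=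
                mul_le_mul_of_nonneg_left hns1 (by positivity)
            _ ≤ c * (t:ℝ) ^ (c-1) := by
                rw [mul_one]; exact mul_le_mul_of_nonneg_left hnt (by linarith)
        have habs : |n ^ c - s ^ c| ≤ c * (t:ℝ) ^ (c-1) := hmvt.trans h5
        rw [abs_sub_comm] at habs
        rw [abs_le] at habs ⊢
        constructor <;> [linarith [habs.1]; linarith [habs.2]]
      rw [hBdef]
      have : |A - (-(ξ₂ * s ^ c + ξ₁ * s))| ≤ |ξ₁| + |ξ₂| * (1 + c * (t:ℝ) ^ (c-1)) := by
        refine h2.trans ?_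
        have := mul_le_mul_of_nonneg_left h3 (abs_nonneg ξ₁)
        have := mul_le_mul_of_nonneg_left h4 (abs_nonneg ξ₂)
        linarith
      nlinarith [abs_nonneg (A - (-(ξ₂ * s ^ c + ξ₁ * s)))]
    have := intervalIntegral.norm_integral_le_of_norm_le_const hbound
    simpa using this
  -- combine
  have hnorm : ‖∑ i ∈ Finset.range t,
      (e (-(ξ₂ * (⌊((i:ℝ)+1) ^ c⌋ : ℝ) + ξ₁ * ((i:ℝ)+1))) - ∫ s in (i:ℝ)..((i:ℝ)+1), f s)‖
      ≤ (t:ℝ) * B := by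
    calc _ ≤ ∑ i ∈ Finset.range t, ‖e (-(ξ₂ * (⌊((i:ℝ)+1) ^ c⌋ : ℝ) + ξ₁ * ((i:ℝ)+1)))
          - ∫ s in (i:ℝ)..((i:ℝ)+1), f s‖ := norm_sum_le _ _
      _ ≤ ∑ _i ∈ Finset.range t, B := Finset.sum_le_sum key
      _ = (t:ℝ) * B := by rw [Finset.sum_const, Finset.card_range]; simp [nsmul_eq_mul]
  have hmain : ‖((t : ℂ))⁻¹ * ∑ n ∈ Finset.Icc 1 t,
        e (-(ξ₂ * (⌊(n : ℝ) ^ c⌋ : ℝ) + ξ₁ * n)) -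
      ((t : ℂ))⁻¹ * ∫ s in (0 : ℝ)..(t : ℝ), e (-(ξ₂ * s ^ c + ξ₁ * s))‖ ≤ B := by
    have heq : ((t : ℂ))⁻¹ * ∑ n ∈ Finset.Icc 1 t,
          e (-(ξ₂ * (⌊(n : ℝ) ^ c⌋ : ℝ) + ξ₁ * n)) -
        ((t : ℂ))⁻¹ * ∫ s in (0 : ℝ)..(t : ℝ), e (-(ξ₂ * s ^ c + ξ₁ * s))
        = ((t : ℂ))⁻¹ * ∑ i ∈ Finset.range t,
          (e (-(ξ₂ * (⌊((i:ℝ)+1) ^ c⌋ : ℝ) + ξ₁ * ((i:ℝ)+1))) - ∫ s in (i:ℝ)..((i:ℝ)+1), f s) := by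
      rw [hsum, show (∫ s in (0 : ℝ)..(t : ℝ), e (-(ξ₂ * s ^ c + ξ₁ * s))) = ∫ s in (0:ℝ)..(t:ℝ), f s from rfl, hsplit, Finset.sum_sub_distrib, mul_sub]
    rw [heq, norm_mul]
    have hct : ‖((t:ℂ))⁻¹‖ = ((t:ℝ))⁻¹ := by
      rw [norm_inv, Complex.norm_natCast]
    rw [hct]
    calc ((t:ℝ))⁻¹ * ‖_‖ ≤ ((t:ℝ))⁻¹ * ((t:ℝ) * B) := by
          exact mul_le_mul_of_nonneg_left hnorm (by positivity)
      _ = B := by field_simp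
  refine hmain.trans ?_
  -- final estimate on B
  have hB : B ≤ 2 * Real.pi * (2 + c) * (t:ℝ) ^ (2*ε-1) := by
    have e1 : (t:ℝ) ^ (ε - c) ≤ (t:ℝ) ^ (2*ε-1) :=
      Real.rpow_le_rpow_of_exponent_le ht1 (by linarith)
    have e2 : (t:ℝ) ^ (ε - c) * (t:ℝ) ^ (c-1) = (t:ℝ) ^ (ε-1) := by
      rw [← Real.rpow_add ht0]; ring_nf
    have e3 : (t:ℝ) ^ (ε-1) ≤ (t:ℝ) ^ (2*ε-1) :=
      Real.rpow_le_rpow_of_exponent_le ht1 (by linarith)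
    have h2 : |ξ₂| * (1 + c * (t:ℝ) ^ (c-1)) ≤ (t:ℝ) ^ (2*ε-1) + c * (t:ℝ) ^ (2*ε-1) := by
      have htc : (0:ℝ) ≤ (t:ℝ) ^ (c-1) := by positivity
      have : |ξ₂| * (1 + c * (t:ℝ) ^ (c-1)) ≤ (t:ℝ)^(ε-c) * (1 + c * (t:ℝ) ^ (c-1)) :=
        mul_le_mul_of_nonneg_right hξ₂ (by nlinarith)
      refine this.trans ?_
      have : (t:ℝ)^(ε-c) * (1 + c * (t:ℝ) ^ (c-1)) = (t:ℝ)^(ε-c) + c * (t:ℝ)^(ε-1) := by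
        rw [mul_add, mul_one, ← e2]; ring
      rw [this]
      have := mul_le_mul_of_nonneg_left e3 (by linarith : (0:ℝ) ≤ c)
      linarith
    rw [hBdef]
    nlinarith [hπ, hξ₁, h2]
  refine hB.trans ?_
  have : (0:ℝ) < (t:ℝ) ^ (2*ε-1) := by positivity
  nlinarith
end

section
/- Let c ∈ (1,2) and ε ∈ (0, min{1/4, 2−c}). There exists C > 0 such that for all real t ≥ 1 and all (ξ₁,ξ₂) ∈ ℝ² with |ξ₂| > t^{ε−c}, we have |(1/t)∫_0^t e^{-2πi(ξ₂s^c + ξ₁s)} ds| ≤ C·t^{-ε/4}. -/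
open MeasureTheory intervalIntegral

lemma norm_e (x : ℝ) : ‖e x‖ = 1 := by
  have : (2 * Real.pi * Complex.I * x) = ((2 * Real.pi * x : ℝ) : ℂ) * Complex.I := by
    push_cast; ring
  rw [e, this, Complex.norm_exp_ofReal_mul_I]

lemma e_neg_conj (x : ℝ) : e (-x) = (starRingEnd ℂ) (e x) := by
  rw [e, e, ← Complex.exp_conj]
  congr 1
  simp [Complex.ext_iff]

lemma hasDerivAt_e {φ : ℝ → ℝ} {ψ : ℝ → ℝ} {s : ℝ} (h : HasDerivAt φ (ψ s) s) :
    HasDerivAt (fun x => e (φ x)) (2 * Real.pi * Complex.I * ψ s * e (φ s)) s := by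
  have h1 : HasDerivAt (fun x : ℝ => ((φ x : ℝ) : ℂ)) (ψ s) s := h.ofReal_comp
  have h2 := (h1.const_mul (2 * Real.pi * Complex.I)).cexp
  simp only [e]
  convert h2 using 1
  ring

lemma hasDerivAt_inv_comp {u : ℝ → ℂ} {u' : ℂ} {x : ℝ} (hu : HasDerivAt u u' x)
    (h0 : u x ≠ 0) : HasDerivAt (fun y => (u y)⁻¹) (-u' / u x ^ 2) x := by
  have h := ((hasDerivAt_inv h0).hasFDerivAt.restrictScalars ℝ).comp_hasDerivAt x hu
  refine h.congr_deriv ?_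
  simp [ContinuousLinearMap.smulRight_apply]
  ring

lemma fdt {a b m : ℝ} {φ ψ ρ : ℝ → ℝ} (hab : a ≤ b) (hm : 0 < m)
    (hφ : ∀ s ∈ Set.Icc a b, HasDerivAt φ (ψ s) s)
    (hψ : ∀ s ∈ Set.Icc a b, HasDerivAt ψ (ρ s) s)
    (hρc : ContinuousOn ρ (Set.Icc a b))
    (hρ0 : ∀ s ∈ Set.Icc a b, 0 ≤ ρ s)
    (hsgn : (∀ s ∈ Set.Icc a b, m ≤ ψ s) ∨ (∀ s ∈ Set.Icc a b, ψ s ≤ -m)) :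
    ‖∫ s in a..b, e (φ s)‖ ≤ 1 / m := by
  set c0 : ℂ := 2 * Real.pi * Complex.I with hc0def
  have hπ : (0:ℝ) < Real.pi := Real.pi_pos
  have hc0 : c0 ≠ 0 := by
    simp [hc0def, Complex.ext_iff, Real.pi_ne_zero]
  have hnc0 : ‖c0‖ = 2 * Real.pi := by
    simp [hc0def, norm_mul, Complex.norm_I, Real.norm_eq_abs,
      abs_of_pos hπ]
  have hψabs : ∀ s ∈ Set.Icc a b, m ≤ |ψ s| := by
    intro s hs
    rcases hsgn with h | h
    · rw [abs_of_pos (lt_of_lt_of_le hm (h s hs))]; exact h s hs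
    · rw [abs_of_neg (lt_of_le_of_lt (h s hs) (by linarith))]; linarith [h s hs]
  have hψ0 : ∀ s ∈ Set.Icc a b, ψ s ≠ 0 := by
    intro s hs h0
    have := hψabs s hs
    rw [h0] at this; simp at this; linarith
  have hφcont : ContinuousOn φ (Set.Icc a b) :=
    fun s hs => (hφ s hs).continuousAt.continuousWithinAt
  have hψcont : ContinuousOn ψ (Set.Icc a b) :=
    fun s hs => (hψ s hs).continuousAt.continuousWithinAt
  have hφC : ContinuousOn (fun s => c0 * ((φ s : ℝ) : ℂ)) (Set.Icc a b) :=
    continuousOn_const.mul (Complex.continuous_ofReal.comp_continuousOn hφcont)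
  have hecont : ContinuousOn (fun s => e (φ s)) (Set.Icc a b) :=
    Complex.continuous_exp.comp_continuousOn hφC
  -- g and its derivative
  set g : ℝ → ℂ := fun s => (c0 * ψ s)⁻¹ with hgdef
  set g' : ℝ → ℂ := fun s => -(c0 * ρ s) / (c0 * ψ s) ^ 2 with hg'def
  have hden : ∀ s ∈ Set.Icc a b, c0 * (ψ s : ℂ) ≠ 0 := by
    intro s hs
    exact mul_ne_zero hc0 (by exact_mod_cast hψ0 s hs)
  have hg : ∀ s ∈ Set.Icc a b, HasDerivAt g (g' s) s := by
    intro s hs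
    exact hasDerivAt_inv_comp ((hψ s hs).ofReal_comp.const_mul c0) (hden s hs)
  have hgcont : ContinuousOn g (Set.Icc a b) :=
    (continuousOn_const.mul (Complex.continuous_ofReal.comp_continuousOn hψcont)).inv₀ hden
  have hg'cont : ContinuousOn g' (Set.Icc a b) := by
    apply ContinuousOn.div
    · exact (continuousOn_const.mul
        (Complex.continuous_ofReal.comp_continuousOn hρc)).neg
    · exact (continuousOn_const.mul
        (Complex.continuous_ofReal.comp_continuousOn hψcont)).pow 2
    · intro s hs; exact pow_ne_zero 2 (hden s hs)
  -- G and FTC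
  set G : ℝ → ℂ := fun s => g s * e (φ s) with hGdef
  have hG : ∀ s ∈ Set.Icc a b, HasDerivAt G (g' s * e (φ s) + e (φ s)) s := by
    intro s hs
    have h1 := (hg s hs).mul (hasDerivAt_e (hφ s hs))
    have h2 : g s * (2 * (Real.pi : ℂ) * Complex.I * (ψ s : ℂ) * e (φ s)) = e (φ s) := by
      simp only [← hc0def]
      exact inv_mul_cancel_left₀ (hden s hs) _
    rw [h2] at h1
    exact h1
  have hint1 : IntervalIntegrable (fun s => g' s * e (φ s)) volume a b := by
    apply ContinuousOn.intervalIntegrable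
    rw [Set.uIcc_of_le hab]
    exact hg'cont.mul hecont
  have hint2 : IntervalIntegrable (fun s => e (φ s)) volume a b := by
    apply ContinuousOn.intervalIntegrable
    rw [Set.uIcc_of_le hab]
    exact hecont
  have hFTC : (∫ s in a..b, (g' s * e (φ s) + e (φ s))) = G b - G a := by
    apply intervalIntegral.integral_eq_sub_of_hasDerivAt
    · intro s hs; rw [Set.uIcc_of_le hab] at hs; exact hG s hs
    · exact hint1.add hint2
  have hsplit : (∫ s in a..b, e (φ s)) = G b - G a - ∫ s in a..b, g' s * e (φ s) := by
    rw [← hFTC, intervalIntegral.integral_add hint1 hint2]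
    ring
  -- norms
  have hgnorm : ∀ s ∈ Set.Icc a b, ‖g s‖ ≤ 1 / (2 * Real.pi * m) := by
    intro s hs
    rw [hgdef]
    simp only [norm_inv, norm_mul, hnc0, Complex.norm_real, Real.norm_eq_abs]
    rw [inv_eq_one_div]
    apply div_le_div_of_nonneg_left one_pos.le (by positivity)
    have := hψabs s hs
    nlinarith [Real.pi_gt_three]
  -- variation integral
  set r : ℝ → ℝ := fun s => ρ s / (2 * Real.pi * (ψ s) ^ 2) with hrdef
  have hnorm_g' : ∀ s ∈ Set.Icc a b, ‖g' s * e (φ s)‖ = r s := by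
    intro s hs
    rw [norm_mul, norm_e, mul_one, hg'def]
    simp only [norm_div, norm_neg, norm_mul, norm_pow, hnc0, Complex.norm_real,
      Real.norm_eq_abs]
    rw [abs_of_nonneg (hρ0 s hs), hrdef]
    have h1 : |ψ s| ^ 2 = ψ s ^ 2 := sq_abs _
    have h2 : (0:ℝ) < ψ s ^ 2 := by
      have := hψ0 s hs; positivity
    rw [mul_pow, sq_abs, div_eq_div_iff (by positivity) (by positivity)]
    ring
  have hA : ∀ s ∈ Set.Icc a b, HasDerivAt (fun y => -(ψ y)⁻¹ / (2 * Real.pi)) (r s) s := by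
    intro s hs
    have h1 := ((hψ s hs).inv (hψ0 s hs)).neg.div_const (2 * Real.pi)
    refine h1.congr_deriv ?_
    rw [hrdef]
    ring
  have hrint : IntervalIntegrable r volume a b := by
    apply ContinuousOn.intervalIntegrable
    rw [Set.uIcc_of_le hab]
    apply hρc.div (continuousOn_const.mul (hψcont.pow 2))
    intro s hs
    have := hψ0 s hs
    simp only [Pi.mul_apply, Pi.pow_apply]
    positivity
  have hIr : (∫ s in a..b, r s)
      = -(ψ b)⁻¹ / (2 * Real.pi) - -(ψ a)⁻¹ / (2 * Real.pi) := by
    apply intervalIntegral.integral_eq_sub_of_hasDerivAt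
    · intro s hs; rw [Set.uIcc_of_le hab] at hs; exact hA s hs
    · exact hrint
  have hkey : (ψ a)⁻¹ - (ψ b)⁻¹ ≤ m⁻¹ := by
    have hamem : a ∈ Set.Icc a b := ⟨le_refl a, hab⟩
    have hbmem : b ∈ Set.Icc a b := ⟨hab, le_refl b⟩
    rcases hsgn with h | h
    · have ha := h a hamem
      have hb := h b hbmem
      have h1 : (ψ a)⁻¹ ≤ m⁻¹ := by
        apply inv_anti₀ hm ha
      have h2 : (0:ℝ) < (ψ b)⁻¹ := by
        have : (0:ℝ) < ψ b := lt_of_lt_of_le hm hb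
        positivity
      linarith
    · have ha := h a hamem
      have hb := h b hbmem
      have h1 : (ψ a)⁻¹ < 0 := by
        apply inv_lt_zero.2; linarith
      have h2 : -(ψ b)⁻¹ ≤ m⁻¹ := by
        rw [← inv_neg]
        apply inv_anti₀ hm; linarith
      linarith
  have hIrle : (∫ s in a..b, r s) ≤ 1 / (2 * Real.pi * m) := by
    rw [hIr]
    have h2π : (0:ℝ) < 2 * Real.pi := by positivity
    calc -(ψ b)⁻¹ / (2 * Real.pi) - -(ψ a)⁻¹ / (2 * Real.pi)
        = ((ψ a)⁻¹ - (ψ b)⁻¹) / (2 * Real.pi) := by ring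
      _ ≤ m⁻¹ / (2 * Real.pi) := by gcongr
      _ = 1 / (2 * Real.pi * m) := by
          rw [inv_eq_one_div, div_div, mul_comm m]
  have h3 : ‖∫ s in a..b, g' s * e (φ s)‖ ≤ 1 / (2 * Real.pi * m) := by
    calc ‖∫ s in a..b, g' s * e (φ s)‖
        ≤ ∫ s in a..b, ‖g' s * e (φ s)‖ :=
          intervalIntegral.norm_integral_le_integral_norm hab
      _ = ∫ s in a..b, r s := by
          apply intervalIntegral.integral_congr
          rw [Set.uIcc_of_le hab]
          exact hnorm_g'
      _ ≤ 1 / (2 * Real.pi * m) := hIrle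
  have hGnorm : ∀ s ∈ Set.Icc a b, ‖G s‖ ≤ 1 / (2 * Real.pi * m) := by
    intro s hs
    rw [hGdef]
    simp only [norm_mul, norm_e, mul_one]
    exact hgnorm s hs
  have hamem : a ∈ Set.Icc a b := ⟨le_refl a, hab⟩
  have hbmem : b ∈ Set.Icc a b := ⟨hab, le_refl b⟩
  have hsmall : 1 / (2 * Real.pi * m) ≤ 1 / (6 * m) := by
    apply one_div_le_one_div_of_le (by positivity)
    nlinarith [Real.pi_gt_three]
  calc ‖∫ s in a..b, e (φ s)‖
      = ‖G b - G a - ∫ s in a..b, g' s * e (φ s)‖ := by rw [hsplit]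
    _ ≤ ‖G b - G a‖ + ‖∫ s in a..b, g' s * e (φ s)‖ := norm_sub_le _ _
    _ ≤ (‖G b‖ + ‖G a‖) + ‖∫ s in a..b, g' s * e (φ s)‖ := by
        have := norm_sub_le (G b) (G a); linarith
    _ ≤ (1 / (6 * m) + 1 / (6 * m)) + 1 / (6 * m) := by
        have h1 := le_trans (hGnorm b hbmem) hsmall
        have h2 := le_trans (hGnorm a hamem) hsmall
        have h4 := le_trans h3 hsmall
        linarith
    _ ≤ 1 / m := by
        rw [show (1:ℝ) / (6 * m) + 1 / (6 * m) + 1 / (6 * m) = 1 / (2 * m) by ring]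
        apply one_div_le_one_div_of_le hm (by linarith)

lemma vdc {a b l : ℝ} {φ ψ ρ : ℝ → ℝ} (hab : a ≤ b) (hl : 0 < l)
    (hφ : ∀ s ∈ Set.Icc a b, HasDerivAt φ (ψ s) s)
    (hψ : ∀ s ∈ Set.Icc a b, HasDerivAt ψ (ρ s) s)
    (hρc : ContinuousOn ρ (Set.Icc a b))
    (hρ : ∀ s ∈ Set.Icc a b, l ≤ ρ s) :
    ‖∫ s in a..b, e (φ s)‖ ≤ 4 / Real.sqrt l := by
  set m := Real.sqrt l with hmdef
  have hm : 0 < m := Real.sqrt_pos.2 hl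
  set δ := 1 / m with hδdef
  have hδ : 0 < δ := by positivity
  have hlδ : l * δ = m := by
    rw [hδdef, mul_one_div, hmdef, Real.div_sqrt]
  have hψcont : ContinuousOn ψ (Set.Icc a b) :=
    fun s hs => (hψ s hs).continuousAt.continuousWithinAt
  have hφcont : ContinuousOn φ (Set.Icc a b) :=
    fun s hs => (hφ s hs).continuousAt.continuousWithinAt
  have hecont : ContinuousOn (fun s => e (φ s)) (Set.Icc a b) := by
    have : ContinuousOn (fun s => (2 * Real.pi * Complex.I) * ((φ s : ℝ) : ℂ))
        (Set.Icc a b) :=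
      continuousOn_const.mul (Complex.continuous_ofReal.comp_continuousOn hφcont)
    exact Complex.continuous_exp.comp_continuousOn this
  -- monotonicity of ψ with slope at least l
  have hmono : ∀ x ∈ Set.Icc a b, ∀ y ∈ Set.Icc a b, x ≤ y →
      ψ x + l * (y - x) ≤ ψ y := by
    intro x hx y hy hxy
    have hsub : Set.Icc x y ⊆ Set.Icc a b := Set.Icc_subset_Icc hx.1 hy.2
    have huicc : Set.uIcc x y = Set.Icc x y := Set.uIcc_of_le hxy
    have hρint : IntervalIntegrable ρ volume x y := by
      apply ContinuousOn.intervalIntegrable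
      rw [huicc]; exact hρc.mono hsub
    have hftc : (∫ s in x..y, ρ s) = ψ y - ψ x := by
      apply intervalIntegral.integral_eq_sub_of_hasDerivAt
      · intro s hs; rw [huicc] at hs; exact hψ s (hsub hs)
      · exact hρint
    have hlower : l * (y - x) ≤ ∫ s in x..y, ρ s := by
      have h1 : (∫ _ in x..y, l) ≤ ∫ s in x..y, ρ s := by
        apply intervalIntegral.integral_mono_on hxy intervalIntegrable_const hρint
        intro s hs; exact hρ s (hsub hs)
      rwa [intervalIntegral.integral_const, smul_eq_mul, mul_comm] at h1
    linarith
  -- choice of (near-)stationary point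
  obtain ⟨s₀, hs₀mem, hs₀⟩ : ∃ s₀ ∈ Set.Icc a b, ∀ s ∈ Set.Icc a b,
      (s₀ < s → l * (s - s₀) ≤ ψ s) ∧ (s < s₀ → ψ s ≤ -(l * (s₀ - s))) := by
    by_cases h1 : 0 ≤ ψ a
    · refine ⟨a, ⟨le_refl a, hab⟩, fun s hs =>
        ⟨fun _ => ?_, fun h => absurd h (not_lt.2 hs.1)⟩⟩
      have := hmono a ⟨le_refl a, hab⟩ s hs hs.1
      linarith
    by_cases h2 : ψ b ≤ 0
    · refine ⟨b, ⟨hab, le_refl b⟩, fun s hs =>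
        ⟨fun h => absurd h (not_lt.2 hs.2), fun _ => ?_⟩⟩
      have := hmono s hs b ⟨hab, le_refl b⟩ hs.2
      linarith
    push_neg at h1 h2
    obtain ⟨s₀, hs₀mem, hval⟩ := intermediate_value_Icc hab hψcont
      (Set.mem_Icc.2 ⟨h1.le, h2.le⟩)
    refine ⟨s₀, hs₀mem, fun s hs => ⟨fun h => ?_, fun h => ?_⟩⟩
    · have := hmono s₀ hs₀mem s hs h.le; rw [hval] at this; linarith
    · have := hmono s hs s₀ hs₀mem h.le; rw [hval] at this; linarith
  set u := max a (s₀ - δ) with hudef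
  set v := min b (s₀ + δ) with hvdef
  have hau : a ≤ u := le_max_left _ _
  have hus₀ : u ≤ s₀ := max_le hs₀mem.1 (by linarith)
  have hs₀v : s₀ ≤ v := le_min hs₀mem.2 (by linarith)
  have hvb : v ≤ b := min_le_left _ _
  have huv : u ≤ v := le_trans hus₀ hs₀v
  have humem : u ∈ Set.Icc a b := ⟨hau, le_trans huv hvb⟩
  have hvmem : v ∈ Set.Icc a b := ⟨le_trans hau huv, hvb⟩
  have hint : ∀ {x y : ℝ}, x ∈ Set.Icc a b → y ∈ Set.Icc a b →
      IntervalIntegrable (fun s => e (φ s)) volume x y := by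
    intro x y hx hy
    apply ContinuousOn.intervalIntegrable
    exact hecont.mono (Set.uIcc_subset_Icc hx hy)
  have hsplit : (∫ s in a..b, e (φ s)) =
      (∫ s in a..u, e (φ s)) + (∫ s in u..v, e (φ s)) + (∫ s in v..b, e (φ s)) := by
    have hamem : a ∈ Set.Icc a b := ⟨le_refl a, hab⟩
    have hbmem : b ∈ Set.Icc a b := ⟨hab, le_refl b⟩
    rw [← intervalIntegral.integral_add_adjacent_intervals (hint hamem humem)
      (hint humem hbmem),
      ← intervalIntegral.integral_add_adjacent_intervals (hint humem hvmem)
      (hint hvmem hbmem), add_assoc]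
  -- middle piece
  have hmid : ‖∫ s in u..v, e (φ s)‖ ≤ 2 * δ := by
    have h1 : ‖∫ s in u..v, e (φ s)‖ ≤ 1 * |v - u| := by
      apply intervalIntegral.norm_integral_le_of_norm_le_const
      intro x _
      rw [norm_e]
    rw [one_mul, abs_of_nonneg (by linarith)] at h1
    have h2 : v - u ≤ 2 * δ := by
      have h3 : s₀ - δ ≤ u := le_max_right _ _
      have h4 : v ≤ s₀ + δ := min_le_right _ _
      linarith
    linarith
  -- right piece
  have hright : ‖∫ s in v..b, e (φ s)‖ ≤ 1 / m := by
    by_cases hcase : s₀ + δ < b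
    · have hveq : v = s₀ + δ := min_eq_right hcase.le
      have hsub : Set.Icc v b ⊆ Set.Icc a b := Set.Icc_subset_Icc hvmem.1 (le_refl b)
      apply fdt hvb hm (fun s hs => hφ s (hsub hs)) (fun s hs => hψ s (hsub hs))
        (hρc.mono hsub) (fun s hs => le_trans hl.le (hρ s (hsub hs)))
      left
      intro s hs
      have hsmem := hsub hs
      have h5 : s₀ + δ ≤ s := hveq ▸ hs.1
      have hlt : s₀ < s := by linarith
      have h1 := (hs₀ s hsmem).1 hlt
      have h2 : l * δ ≤ l * (s - s₀) :=
        mul_le_mul_of_nonneg_left (by linarith) hl.le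
      rw [hlδ] at h2
      linarith
    · have hveq : v = b := min_eq_left (not_lt.1 hcase)
      rw [hveq, intervalIntegral.integral_same, norm_zero]
      positivity
  -- left piece
  have hleft : ‖∫ s in a..u, e (φ s)‖ ≤ 1 / m := by
    by_cases hcase : a < s₀ - δ
    · have hueq : u = s₀ - δ := max_eq_right hcase.le
      have hsub : Set.Icc a u ⊆ Set.Icc a b := Set.Icc_subset_Icc (le_refl a) humem.2
      apply fdt hau hm (fun s hs => hφ s (hsub hs)) (fun s hs => hψ s (hsub hs))
        (hρc.mono hsub) (fun s hs => le_trans hl.le (hρ s (hsub hs)))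
      right
      intro s hs
      have hsmem := hsub hs
      have h5 : s ≤ s₀ - δ := hueq ▸ hs.2
      have hlt : s < s₀ := by linarith
      have h1 := (hs₀ s hsmem).2 hlt
      have h2 : l * δ ≤ l * (s₀ - s) :=
        mul_le_mul_of_nonneg_left (by linarith) hl.le
      rw [hlδ] at h2
      linarith
    · have hueq : u = a := max_eq_left (not_lt.1 hcase)
      rw [hueq, intervalIntegral.integral_same, norm_zero]
      positivity
  -- combine
  have h2δ : 2 * δ = 2 / m := by rw [hδdef]; ring
  calc ‖∫ s in a..b, e (φ s)‖
      ≤ ‖∫ s in a..u, e (φ s)‖ + ‖∫ s in u..v, e (φ s)‖ + ‖∫ s in v..b, e (φ s)‖ := by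
        rw [hsplit]
        exact le_trans (norm_add_le _ _) (by gcongr; exact norm_add_le _ _)
    _ ≤ 1 / m + 2 * δ + 1 / m := by
        have := hmid; have := hleft; have := hright; linarith
    _ = 4 / m := by rw [h2δ]; ring

lemma intervalIntegral_conj {f : ℝ → ℂ} {a b : ℝ} :
    (∫ s in a..b, (starRingEnd ℂ) (f s)) = (starRingEnd ℂ) (∫ s in a..b, f s) := by
  simp only [intervalIntegral, integral_conj, ← map_sub]

lemma vdc_neg {a b l : ℝ} {φ ψ ρ : ℝ → ℝ} (hab : a ≤ b) (hl : 0 < l)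
    (hφ : ∀ s ∈ Set.Icc a b, HasDerivAt φ (ψ s) s)
    (hψ : ∀ s ∈ Set.Icc a b, HasDerivAt ψ (ρ s) s)
    (hρc : ContinuousOn ρ (Set.Icc a b))
    (hρ : ∀ s ∈ Set.Icc a b, ρ s ≤ -l) :
    ‖∫ s in a..b, e (φ s)‖ ≤ 4 / Real.sqrt l := by
  have h1 : ∀ s : ℝ, e (φ s) = (starRingEnd ℂ) (e (-φ s)) := by
    intro s; rw [← e_neg_conj, neg_neg]
  calc ‖∫ s in a..b, e (φ s)‖
      = ‖(starRingEnd ℂ) (∫ s in a..b, e (-φ s))‖ := by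
        rw [← intervalIntegral_conj]
        congr 1
        exact intervalIntegral.integral_congr (fun s _ => h1 s)
    _ = ‖∫ s in a..b, e (-φ s)‖ := RCLike.norm_conj _
    _ ≤ 4 / Real.sqrt l := by
        apply vdc hab hl (ψ := fun s => -ψ s) (ρ := fun s => -ρ s)
        · intro s hs; exact (hφ s hs).neg
        · intro s hs; exact (hψ s hs).neg
        · exact hρc.neg
        · intro s hs; linarith [hρ s hs]

set_option maxHeartbeats 1000000 in
theorem stmt9 (c ε : ℝ) (hc1 : 1 < c) (hc2 : c < 2)
    (hε1 : 0 < ε) (hε2 : ε < min (1/4) (2 - c)) :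
    ∃ C > (0 : ℝ), ∀ (t : ℝ), 1 ≤ t → ∀ (ξ₁ ξ₂ : ℝ),
      t ^ (ε - c) < |ξ₂| →
      ‖((t : ℂ))⁻¹ * ∫ s in (0 : ℝ)..t, e (-(ξ₂ * s ^ c + ξ₁ * s))‖ ≤
        C * t ^ (-(ε / 4)) := by
  have hcc : (0:ℝ) < c * (c - 1) := by nlinarith
  set K : ℝ := 4 / Real.sqrt (c * (c - 1)) with hKdef
  have hK : 0 < K := by
    have := Real.sqrt_pos.2 hcc
    positivity
  refine ⟨1 + K, by positivity, ?_⟩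
  intro t ht ξ₁ ξ₂ hξ
  have ht0 : (0:ℝ) < t := lt_of_lt_of_le one_pos ht
  have hξ0 : (0:ℝ) < |ξ₂| := lt_trans (Real.rpow_pos_of_pos ht0 _) hξ
  have hξne : ξ₂ ≠ 0 := fun h => by simp [h] at hξ0
  -- the phase and its derivatives on [1, t]
  set φ : ℝ → ℝ := fun s => -(ξ₂ * s ^ c + ξ₁ * s) with hφdef
  set ψ : ℝ → ℝ := fun s => -(ξ₂ * (c * s ^ (c-1)) + ξ₁) with hψdef
  set ρ : ℝ → ℝ := fun s => -(ξ₂ * (c * ((c-1) * s ^ (c-2)))) with hρdef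
  have hφd : ∀ s ∈ Set.Icc (1:ℝ) t, HasDerivAt φ (ψ s) s := by
    intro s hs
    have hs0 : (0:ℝ) < s := lt_of_lt_of_le one_pos hs.1
    have h1 : HasDerivAt (fun x : ℝ => x ^ c) (c * s ^ (c-1)) s :=
      Real.hasDerivAt_rpow_const (Or.inl hs0.ne')
    have h2 := (h1.const_mul ξ₂).add ((hasDerivAt_id s).const_mul ξ₁)
    simp only [mul_one] at h2
    exact h2.neg
  have hψd : ∀ s ∈ Set.Icc (1:ℝ) t, HasDerivAt ψ (ρ s) s := by
    intro s hs
    have hs0 : (0:ℝ) < s := lt_of_lt_of_le one_pos hs.1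
    have h1 : HasDerivAt (fun x : ℝ => x ^ (c-1)) ((c-1) * s ^ (c-2)) s := by
      have h := Real.hasDerivAt_rpow_const (x := s) (p := c-1) (Or.inl hs0.ne')
      convert h using 2
      ring
    have h2 := (((h1.const_mul c).const_mul ξ₂).add_const ξ₁).neg
    exact h2
  have hρcont : ContinuousOn ρ (Set.Icc (1:ℝ) t) := by
    have h1 : ContinuousOn (fun s : ℝ => s ^ (c-2)) (Set.Icc (1:ℝ) t) := by
      intro s hs
      exact (Real.continuousAt_rpow_const s (c-2)
        (Or.inl (lt_of_lt_of_le one_pos hs.1).ne')).continuousWithinAt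
    exact (continuousOn_const.mul
      (continuousOn_const.mul (continuousOn_const.mul h1))).neg
  -- lower bound for the second derivative
  set L : ℝ := c * (c - 1) * |ξ₂| * t ^ (c - 2) with hLdef
  have hL : 0 < L := by
    have := Real.rpow_pos_of_pos ht0 (c-2)
    positivity
  have hρabs : ∀ s ∈ Set.Icc (1:ℝ) t, L ≤ c * (c-1) * |ξ₂| * s ^ (c-2) := by
    intro s hs
    have hs0 : (0:ℝ) < s := lt_of_lt_of_le one_pos hs.1
    have h1 : t ^ (c-2) ≤ s ^ (c-2) :=
      Real.rpow_le_rpow_of_nonpos hs0 hs.2 (by linarith)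
    have h2 : (0:ℝ) < c * (c-1) * |ξ₂| := by positivity
    rw [hLdef]
    nlinarith
  -- van der Corput estimate on [1, t]
  have hI2 : ‖∫ s in (1:ℝ)..t, e (φ s)‖ ≤ 4 / Real.sqrt L := by
    rcases lt_or_gt_of_ne hξne with hneg | hpos
    · -- ξ₂ < 0 : ρ ≥ L
      apply vdc ht hL hφd hψd hρcont
      intro s hs
      have := hρabs s hs
      have habs : |ξ₂| = -ξ₂ := abs_of_neg hneg
      rw [habs] at this
      simp only [hρdef]
      nlinarith
    · -- ξ₂ > 0 : ρ ≤ -L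
      apply vdc_neg ht hL hφd hψd hρcont
      intro s hs
      have := hρabs s hs
      have habs : |ξ₂| = ξ₂ := abs_of_pos hpos
      rw [habs] at this
      simp only [hρdef]
      nlinarith
  -- trivial bound on [0,1]
  have hcont : Continuous (fun s : ℝ => e (φ s)) := by
    apply Complex.continuous_exp.comp
    apply continuous_const.mul
    apply Complex.continuous_ofReal.comp
    rw [hφdef]
    have h1 : Continuous (fun s : ℝ => s ^ c) := by
      rw [continuous_iff_continuousAt]
      intro x
      exact Real.continuousAt_rpow_const x c (Or.inr (by linarith))
    continuity
  have hI1 : ‖∫ s in (0:ℝ)..1, e (φ s)‖ ≤ 1 := by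
    have h := intervalIntegral.norm_integral_le_of_norm_le_const
      (C := 1) (a := (0:ℝ)) (b := 1) (f := fun s => e (φ s))
      (fun x _ => le_of_eq (norm_e _))
    simpa using h
  -- splitting
  have hsplit : (∫ s in (0:ℝ)..t, e (φ s)) =
      (∫ s in (0:ℝ)..1, e (φ s)) + ∫ s in (1:ℝ)..t, e (φ s) := by
    rw [intervalIntegral.integral_add_adjacent_intervals
      (hcont.intervalIntegrable 0 1) (hcont.intervalIntegrable 1 t)]
  -- put together
  have hnormt : ‖((t:ℂ))⁻¹‖ = t⁻¹ := by
    rw [norm_inv, Complex.norm_real, Real.norm_eq_abs, abs_of_pos ht0]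
  have hLlow : c * (c-1) * t ^ (ε - 2) ≤ L := by
    rw [hLdef]
    have h1 : t ^ (ε - c) * t ^ (c - 2) ≤ |ξ₂| * t ^ (c-2) := by
      have := Real.rpow_pos_of_pos ht0 (c-2)
      nlinarith [hξ.le]
    rw [← Real.rpow_add ht0] at h1
    have h2 : ε - c + (c - 2) = ε - 2 := by ring
    rw [h2] at h1
    have h3 := mul_le_mul_of_nonneg_left h1 hcc.le
    linarith [h3]
  have hsqrt : Real.sqrt (c * (c-1) * t ^ (ε - 2))
      = Real.sqrt (c * (c-1)) * t ^ ((ε-2)/2) := by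
    have h4 : Real.sqrt (t ^ (ε-2)) = t ^ ((ε-2)/2) := by
      rw [Real.sqrt_eq_rpow, ← Real.rpow_mul ht0.le]
      congr 1
      ring
    rw [Real.sqrt_mul hcc.le, h4]
  have hccpos : (0:ℝ) < Real.sqrt (c * (c-1)) := Real.sqrt_pos.2 hcc
  have htp : (0:ℝ) < t ^ ((ε-2)/2) := Real.rpow_pos_of_pos ht0 _
  have hmonos : Real.sqrt (c * (c-1) * t ^ (ε-2)) ≤ Real.sqrt L :=
    Real.sqrt_le_sqrt hLlow
  have h5 : 4 / Real.sqrt L ≤ 4 / (Real.sqrt (c * (c-1)) * t ^ ((ε-2)/2)) := by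
    rw [← hsqrt]
    apply div_le_div_of_nonneg_left (by norm_num) (by rw [hsqrt]; positivity) hmonos
  have h6 : 4 / (Real.sqrt (c * (c-1)) * t ^ ((ε-2)/2)) = K * t ^ ((2-ε)/2) := by
    rw [hKdef]
    have h7 : t ^ ((2-ε)/2) = (t ^ ((ε-2)/2))⁻¹ := by
      rw [← Real.rpow_neg ht0.le]
      congr 1
      ring
    rw [h7, div_mul_eq_div_div, div_eq_mul_inv (4 / Real.sqrt (c * (c-1)))]
  have hεq : ε < 1/4 := lt_of_lt_of_le hε2 (min_le_left _ _)
  have e1 : t⁻¹ ≤ t ^ (-(ε/4)) := by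
    rw [← Real.rpow_neg_one]
    exact Real.rpow_le_rpow_of_exponent_le ht (by linarith)
  have e2 : t ^ ((2-ε)/2) * t⁻¹ ≤ t ^ (-(ε/4)) := by
    rw [← Real.rpow_neg_one t, ← Real.rpow_add ht0]
    exact Real.rpow_le_rpow_of_exponent_le ht (by linarith)
  calc ‖((t:ℂ))⁻¹ * ∫ s in (0:ℝ)..t, e (φ s)‖
      = t⁻¹ * ‖∫ s in (0:ℝ)..t, e (φ s)‖ := by rw [norm_mul, hnormt]
    _ ≤ t⁻¹ * (1 + K * t ^ ((2-ε)/2)) := by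
        apply mul_le_mul_of_nonneg_left _ (inv_nonneg.2 ht0.le)
        rw [hsplit]
        have h8 := norm_add_le (∫ s in (0:ℝ)..1, e (φ s)) (∫ s in (1:ℝ)..t, e (φ s))
        have h9 : ‖∫ s in (1:ℝ)..t, e (φ s)‖ ≤ K * t ^ ((2-ε)/2) :=
          le_trans hI2 (le_trans h5 (le_of_eq h6))
        linarith
    _ = t⁻¹ + K * (t ^ ((2-ε)/2) * t⁻¹) := by ring
    _ ≤ t ^ (-(ε/4)) + K * t ^ (-(ε/4)) := by
        have := mul_le_mul_of_nonneg_left e2 hK.le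
        linarith
    _ = (1 + K) * t ^ (-(ε/4)) := by ring
end
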